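/- For the uncoded scheme with α ∈ [0,1] and β = 1-α, the distortion D̂1(α,β) = σ²[Pβ²(1-ρ²)/((P+N1)(α²+2αβρ+β²)) + N1/(P+N1)] is a decreasing function of α on [0,1] (with σ², P, N1 > 0, ρ ∈ (0,1)); in particular D̂1(1,0) = N1σ²/(P+N1) and D̂1(0,1) = σ²((1-ρ²)P+N1)/(P+N1). -/

import Mathlib

theorem stmt_3 (σ2 P N1 ρ : ℝ) (hσ : 0 < σ2) (hP : 0 < P) (hN1 : 0 < N1)
    (hρ0 : 0 < ρ) (hρ1 : ρ < 1)
    (D1hat : ℝ → ℝ)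
    (hD1hat : ∀ α : ℝ, D1hat α =
      σ2 * (P * (1 - α) ^ 2 * (1 - ρ ^ 2) /
        ((P + N1) * (α ^ 2 + 2 * α * (1 - α) * ρ + (1 - α) ^ 2)) + N1 / (P + N1))) :
    StrictAntiOn D1hat (Set.Icc 0 1) ∧
      D1hat 1 = N1 * σ2 / (P + N1) ∧
      D1hat 0 = σ2 * ((1 - ρ ^ 2) * P + N1) / (P + N1) := by
  have hPN : 0 < P + N1 := by linarith
  have hρ2 : 0 < 1 - ρ ^ 2 := by nlinarith
  have hq : ∀ a : ℝ, a ∈ Set.Icc (0:ℝ) 1 → 0 < a ^ 2 + 2 * a * (1 - a) * ρ + (1 - a) ^ 2 := by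
    rintro a ⟨h0, h1⟩
    nlinarith [mul_nonneg (mul_nonneg h0 (by linarith : (0:ℝ) ≤ 1 - a)) hρ0.le,
      sq_nonneg (a - (1 - a))]
  refine ⟨?_, ?_, ?_⟩
  · intro a ha b hb hab
    have hqa := hq a ha
    have hqb := hq b hb
    obtain ⟨ha0, ha1⟩ := ha
    obtain ⟨hb0, hb1⟩ := hb
    rw [hD1hat a, hD1hat b]
    have key : P * (1 - b) ^ 2 * (1 - ρ ^ 2) /
        ((P + N1) * (b ^ 2 + 2 * b * (1 - b) * ρ + (1 - b) ^ 2)) <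
        P * (1 - a) ^ 2 * (1 - ρ ^ 2) /
        ((P + N1) * (a ^ 2 + 2 * a * (1 - a) * ρ + (1 - a) ^ 2)) := by
      rw [div_lt_div_iff₀ (mul_pos hPN hqb) (mul_pos hPN hqa)]
      have h2 : 0 < (b - a) * ((1 - a) * b + (1 - b) * a + 2 * ρ * ((1 - a) * (1 - b))) := by
        apply mul_pos (by linarith)
        have hb' : 0 < (1 - a) * b := mul_pos (by linarith) (by linarith)
        have := mul_nonneg (mul_nonneg (by linarith : (0:ℝ) ≤ 2 * ρ)
          (by linarith : (0:ℝ) ≤ 1 - a)) (by linarith : (0:ℝ) ≤ 1 - b)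
        nlinarith [mul_nonneg (by linarith : (0:ℝ) ≤ 1 - b) hb0]
      nlinarith [mul_pos (mul_pos (mul_pos hP hρ2) hPN) h2]
    have := add_lt_add_of_lt_of_le key (le_refl (N1 / (P + N1)))
    exact mul_lt_mul_of_pos_left this hσ
  · rw [hD1hat 1]
    field_simp
    ring
  · rw [hD1hat 0]
    field_simp
    ring_nf
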